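/- Let (E,A,B) be an IDE system with output matrices C ∈ ℂ^{q×n}, D ∈ ℂ^{q×m}, zero dynamics ZD, consistent initial set V^{ZD}, and R(z) := [[zE−A, −B],[C, D]] ∈ ℂ[z]^{(n+q)×(n+m)}. Then the following are equivalent: (i) for every x⁰ ∈ V^{ZD} there exists (x,u) ∈ ZD with Ex₀ = Ex⁰ and lim_{j→∞}(x_j,u_j) = 0 (i.e. the zero dynamics is stabilizable); (ii) the rank of R(z) as a matrix over the field ℂ(z) of rational functions equals the rank of the complex matrix R(λ) for every λ ∈ ℂ with |λ| ≥ 1. -/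

import Mathlib

open Matrix Filter
open scoped ComplexOrder

set_option synthInstance.maxHeartbeats 1000000
set_option maxHeartbeats 1000000

noncomputable section

/-- The behavior of the implicit difference equation `E x_{j+1} = A x_j + B u_j`. -/
def IsBehavior {n m : ℕ} (E A : Matrix (Fin n) (Fin n) ℂ) (B : Matrix (Fin n) (Fin m) ℂ)
    (x : ℕ → Fin n → ℂ) (u : ℕ → Fin m → ℂ) : Prop :=
  ∀ j : ℕ, E *ᵥ x (j + 1) = A *ᵥ x j + B *ᵥ u j

/-- The system space: the smallest subspace of `ℂ^{n+m}` containing all stacked vectors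
`(x_j ; u_j)` of behavior trajectories. -/
def systemSpace {n m : ℕ} (E A : Matrix (Fin n) (Fin n) ℂ) (B : Matrix (Fin n) (Fin m) ℂ) :
    Submodule ℂ (Fin n ⊕ Fin m → ℂ) :=
  Submodule.span ℂ {v : Fin n ⊕ Fin m → ℂ |
    ∃ x u, IsBehavior E A B x u ∧ ∃ j : ℕ, v = Sum.elim (x j) (u j)}

/-- The pencil `zE - A` is regular: its determinant is not the zero polynomial. -/
def RegularPencil {n : ℕ} (E A : Matrix (Fin n) (Fin n) ℂ) : Prop :=
  ((Polynomial.X : Polynomial ℂ) • E.map ⇑(Polynomial.C (R := ℂ)) - A.map ⇑(Polynomial.C (R := ℂ))).det ≠ 0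

/-- The KYP matrix `M(P)`. -/
def kypM {n m : ℕ} (E A : Matrix (Fin n) (Fin n) ℂ) (B : Matrix (Fin n) (Fin m) ℂ)
    (Q : Matrix (Fin n) (Fin n) ℂ) (S : Matrix (Fin n) (Fin m) ℂ)
    (R : Matrix (Fin m) (Fin m) ℂ) (P : Matrix (Fin n) (Fin n) ℂ) :
    Matrix (Fin n ⊕ Fin m) (Fin n ⊕ Fin m) ℂ :=
  fromBlocks (Aᴴ * P * A - Eᴴ * P * E + Q) (Aᴴ * P * B + S)
    (Bᴴ * P * A + Sᴴ) (Bᴴ * P * B + R)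

/-- The Popov function evaluated at a point `z ∈ ℂ` with `det (zE - A) ≠ 0`. -/
def popovEval {n m : ℕ} (E A : Matrix (Fin n) (Fin n) ℂ) (B : Matrix (Fin n) (Fin m) ℂ)
    (Q : Matrix (Fin n) (Fin n) ℂ) (S : Matrix (Fin n) (Fin m) ℂ)
    (R : Matrix (Fin m) (Fin m) ℂ) (z : ℂ) : Matrix (Fin m) (Fin m) ℂ :=
  (fromRows ((z • E - A)⁻¹ * B) (1 : Matrix (Fin m) (Fin m) ℂ))ᴴ *
    fromBlocks Q S Sᴴ R * fromRows ((z • E - A)⁻¹ * B) 1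

/-- Interpret a complex matrix as a matrix of rational functions. -/
def mapRat {a b : Type} (M : Matrix a b ℂ) : Matrix a b (RatFunc ℂ) :=
  M.map ⇑(algebraMap ℂ (RatFunc ℂ))

/-- The Popov function as an `m × m` matrix over the field `ℂ(z)`. -/
def popov {n m : ℕ} (E A : Matrix (Fin n) (Fin n) ℂ) (B : Matrix (Fin n) (Fin m) ℂ)
    (Q : Matrix (Fin n) (Fin n) ℂ) (S : Matrix (Fin n) (Fin m) ℂ)
    (R : Matrix (Fin m) (Fin m) ℂ) : Matrix (Fin m) (Fin m) (RatFunc ℂ) :=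
  mapRat Bᴴ * ((RatFunc.X : RatFunc ℂ)⁻¹ • mapRat Eᴴ - mapRat Aᴴ)⁻¹ * mapRat Q *
      ((RatFunc.X : RatFunc ℂ) • mapRat E - mapRat A)⁻¹ * mapRat B +
    mapRat Bᴴ * ((RatFunc.X : RatFunc ℂ)⁻¹ • mapRat Eᴴ - mapRat Aᴴ)⁻¹ * mapRat S +
    mapRat Sᴴ * ((RatFunc.X : RatFunc ℂ) • mapRat E - mapRat A)⁻¹ * mapRat B +
    mapRat R

/-- A subspace `𝒴` is `N`-neutral if `x^* N y = 0` for all `x, y ∈ 𝒴`. -/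
def IsNeutral {k : Type} [Fintype k] (N : Matrix k k ℂ) (Y : Submodule ℂ (k → ℂ)) : Prop :=
  ∀ x ∈ Y, ∀ y ∈ Y, star x ⬝ᵥ (N *ᵥ y) = 0

/-- A subspace is maximally `N`-neutral if it is `N`-neutral and no strictly larger
subspace is `N`-neutral. -/
def IsMaxNeutral {k : Type} [Fintype k] (N : Matrix k k ℂ) (Y : Submodule ℂ (k → ℂ)) : Prop :=
  IsNeutral N Y ∧ ∀ W : Submodule ℂ (k → ℂ), Y < W → ¬ IsNeutral N W

/-- The zero dynamics of the system `(E,A,B,C,D)`. -/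
def IsZeroDyn {n m q : ℕ} (E A : Matrix (Fin n) (Fin n) ℂ) (B : Matrix (Fin n) (Fin m) ℂ)
    (C : Matrix (Fin q) (Fin n) ℂ) (D : Matrix (Fin q) (Fin m) ℂ)
    (x : ℕ → Fin n → ℂ) (u : ℕ → Fin m → ℂ) : Prop :=
  ∀ j : ℕ, E *ᵥ x (j + 1) = A *ᵥ x j + B *ᵥ u j ∧ C *ᵥ x j + D *ᵥ u j = 0

/-- `R(z) = [[zE−A, −B],[C, D]]` as a matrix over the field `ℂ(z)`. -/
def Rrat {n m q : ℕ} (E A : Matrix (Fin n) (Fin n) ℂ) (B : Matrix (Fin n) (Fin m) ℂ)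
    (C : Matrix (Fin q) (Fin n) ℂ) (D : Matrix (Fin q) (Fin m) ℂ) :
    Matrix (Fin n ⊕ Fin q) (Fin n ⊕ Fin m) (RatFunc ℂ) :=
  fromBlocks ((RatFunc.X : RatFunc ℂ) • mapRat E - mapRat A) (-(mapRat B)) (mapRat C) (mapRat D)

set_option linter.unusedSectionVars false

namespace Stmt2Aux

open Polynomial

/-- The left-shift operator on sequences. -/
def shiftL : Module.End ℂ (ℕ → ℂ) where
  toFun y := fun j => y (j + 1)
  map_add' := by intros; rfl
  map_smul' := by intros; rfl

/-- Action of a polynomial (in the shift) on a sequence. -/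
def polyOp (p : ℂ[X]) : Module.End ℂ (ℕ → ℂ) := Polynomial.aeval shiftL p

lemma shiftL_pow (k : ℕ) (y : ℕ → ℂ) (j : ℕ) : (shiftL ^ k) y j = y (j + k) := by
  induction k generalizing y j with
  | zero => rfl
  | succ k ih =>
    rw [pow_succ]
    show (shiftL ^ k) (shiftL y) j = _
    rw [ih]
    show y (j + k + 1) = _
    exact congrArg y (by omega)

lemma polyOp_apply (p : ℂ[X]) (y : ℕ → ℂ) (j : ℕ) :
    polyOp p y j = ∑ k ∈ Finset.range (p.natDegree + 1), p.coeff k * y (j + k) := by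
  rw [polyOp, Polynomial.aeval_eq_sum_range]
  rw [LinearMap.coe_sum, Finset.sum_apply, Finset.sum_apply]
  refine Finset.sum_congr rfl fun k _ => ?_
  rw [LinearMap.smul_apply]
  show p.coeff k * ((shiftL ^ k) y j) = _
  rw [shiftL_pow]

lemma polyOp_congr_window (p : ℂ[X]) (y z : ℕ → ℂ) (j : ℕ)
    (h : ∀ k ≤ p.natDegree, y (j + k) = z (j + k)) : polyOp p y j = polyOp p z j := by
  rw [polyOp_apply, polyOp_apply]
  refine Finset.sum_congr rfl fun k hk => ?_
  rw [h k (Nat.lt_succ_iff.mp (Finset.mem_range.mp hk))]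

lemma polyOp_zero_fn (p : ℂ[X]) : polyOp p (0 : ℕ → ℂ) = 0 := map_zero _

lemma polyOp_window_zero (p : ℂ[X]) (y : ℕ → ℂ) (j : ℕ)
    (h : ∀ k ≤ p.natDegree, y (j + k) = 0) : polyOp p y j = 0 := by
  rw [polyOp_congr_window p y 0 j (by simpa using h)]
  rw [polyOp_zero_fn]; rfl

lemma polyOp_geom (p : ℂ[X]) (c l : ℂ) :
    polyOp p (fun j => c * l ^ j) = fun j => (p.eval l * c) * l ^ j := by
  funext j
  rw [polyOp_apply, Polynomial.eval_eq_sum_range]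
  rw [Finset.sum_mul, Finset.sum_mul]
  refine Finset.sum_congr rfl fun k _ => ?_
  rw [pow_add]
  ring

/-- A sequence annihilated by `polyOp p` that starts with `natDegree p` zeros is zero. -/
lemma polyOp_zero_of_initial (p : ℂ[X]) (hp : p ≠ 0) (y : ℕ → ℂ)
    (hy : ∀ j, polyOp p y j = 0) (h0 : ∀ j < p.natDegree, y j = 0) : ∀ j, y j = 0 := by
  intro j
  induction j using Nat.strong_induction_on with
  | _ j ih =>
    by_cases hj : j < p.natDegree
    · exact h0 j hj
    · push_neg at hj
      set t := j - p.natDegree with ht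
      have htj : t + p.natDegree = j := by omega
      have := hy t
      rw [polyOp_apply, Finset.sum_range_succ] at this
      have hsum : ∑ k ∈ Finset.range p.natDegree, p.coeff k * y (t + k) = 0 := by
        refine Finset.sum_eq_zero fun k hk => ?_
        rw [Finset.mem_range] at hk
        rw [ih (t + k) (by omega), mul_zero]
      rw [hsum, zero_add, htj] at this
      have hlc : p.coeff p.natDegree ≠ 0 := by
        have h2 := Polynomial.leadingCoeff_ne_zero.mpr hp
        rwa [Polynomial.leadingCoeff] at h2
      exact (mul_eq_zero.mp this).resolve_left hlc

lemma div_le_div_of_nonneg_right' {x y c : ℝ} (h : x ≤ y) (hc : 0 < c) :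
    x / c ≤ y / c := by gcongr

lemma tendsto_of_recurrence {l : ℂ} (hl : ‖l‖ < 1) (y z : ℕ → ℂ)
    (hz : Tendsto z atTop (nhds 0)) (hrec : ∀ j, y (j + 1) = l * y j + z j) :
    Tendsto y atTop (nhds 0) := by
  rw [NormedAddCommGroup.tendsto_nhds_zero] at hz ⊢
  intro ε hε
  set a : ℝ := ‖l‖ with ha
  have ha0 : 0 ≤ a := norm_nonneg l
  have ha1 : 0 < 1 - a := by linarith
  set η : ℝ := ε * (1 - a) / 2 with hη
  have hηpos : 0 < η := by positivity
  obtain ⟨N, hN⟩ := eventually_atTop.mp (hz η hηpos)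
  have key : ∀ t, ‖y (N + t)‖ ≤ a ^ t * ‖y N‖ + η * ∑ i ∈ Finset.range t, a ^ i := by
    intro t
    induction t with
    | zero => simp
    | succ t ih =>
      have h1 : y (N + (t + 1)) = l * y (N + t) + z (N + t) := by
        rw [show N + (t + 1) = (N + t) + 1 by omega, hrec]
      have h2 : ‖y (N + (t + 1))‖ ≤ a * ‖y (N + t)‖ + η := by
        rw [h1]
        calc ‖l * y (N + t) + z (N + t)‖ ≤ ‖l * y (N + t)‖ + ‖z (N + t)‖ := norm_add_le _ _
          _ = a * ‖y (N + t)‖ + ‖z (N + t)‖ := by rw [norm_mul]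
          _ ≤ a * ‖y (N + t)‖ + η := by
              have := hN (N + t) (by omega)
              linarith
      calc ‖y (N + (t + 1))‖ ≤ a * ‖y (N + t)‖ + η := h2
        _ ≤ a * (a ^ t * ‖y N‖ + η * ∑ i ∈ Finset.range t, a ^ i) + η := by nlinarith
        _ = a ^ (t + 1) * ‖y N‖ + η * (a * ∑ i ∈ Finset.range t, a ^ i + 1) := by ring
        _ = a ^ (t + 1) * ‖y N‖ + η * ∑ i ∈ Finset.range (t + 1), a ^ i := by
            rw [geom_sum_succ]
  have hsum : ∀ t : ℕ, (∑ i ∈ Finset.range t, a ^ i) ≤ 1 / (1 - a) := by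
    intro t
    have hne : a ≠ 1 := by linarith
    rw [geom_sum_eq hne]
    have hne2 : a - 1 ≠ 0 := by intro h; apply hne; linarith
    have hne3 : 1 - a ≠ 0 := by linarith
    have h1 : (a ^ t - 1) / (a - 1) = (1 - a ^ t) / (1 - a) := by
      rw [div_eq_div_iff hne2 hne3]
      ring
    rw [h1]
    have hat : 0 ≤ a ^ t := pow_nonneg ha0 t
    have h2 : 1 - a ^ t ≤ 1 := by linarith
    exact div_le_div_of_nonneg_right' h2 ha1
  have hpow : Tendsto (fun t : ℕ => a ^ t * ‖y N‖) atTop (nhds 0) := by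
    simpa using (tendsto_pow_atTop_nhds_zero_of_lt_one ha0 hl).mul_const ‖y N‖
  rw [NormedAddCommGroup.tendsto_nhds_zero] at hpow
  obtain ⟨T, hT⟩ := eventually_atTop.mp (hpow (ε / 2) (by positivity))
  refine eventually_atTop.mpr ⟨N + T, fun j hj => ?_⟩
  set t := j - N with hts
  have hjt : j = N + t := by omega
  have htT : T ≤ t := by omega
  have h5 : a ^ t * ‖y N‖ < ε / 2 := by
    have := hT t htT
    have h6 : 0 ≤ a ^ t * ‖y N‖ := by positivity
    rwa [Real.norm_eq_abs, abs_of_nonneg h6] at this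
  have h7 : η * ∑ i ∈ Finset.range t, a ^ i ≤ ε / 2 := by
    have h8 := hsum t
    have h9 : η * ∑ i ∈ Finset.range t, a ^ i ≤ η * (1 / (1 - a)) :=
      mul_le_mul_of_nonneg_left h8 (le_of_lt hηpos)
    have h10 : η * (1 / (1 - a)) = ε / 2 := by
      field_simp [hη]
      ring
    linarith
  have := key t
  rw [hjt]
  linarith

lemma polyOp_C_apply (c : ℂ) (y : ℕ → ℂ) : polyOp (Polynomial.C c) y = c • y := by
  rw [polyOp, Polynomial.aeval_C]
  rfl

lemma polyOp_X_apply (y : ℕ → ℂ) (j : ℕ) : polyOp Polynomial.X y j = y (j + 1) := by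
  rw [polyOp, Polynomial.aeval_X]
  rfl

lemma tendsto_zero_of_polyOp_aux : ∀ N : ℕ, ∀ p : ℂ[X], p.natDegree ≤ N → p ≠ 0 →
    (∀ μ : ℂ, p.eval μ = 0 → ‖μ‖ < 1) → ∀ y : ℕ → ℂ, polyOp p y = 0 →
    Tendsto y atTop (nhds 0) := by
  intro N
  induction N with
  | zero =>
    intro p hdeg hp hroot y hy
    have hc : p = Polynomial.C (p.coeff 0) := Polynomial.eq_C_of_natDegree_le_zero hdeg
    have hc0 : p.coeff 0 ≠ 0 := fun h => hp (by rw [hc, h, map_zero])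
    have : y = 0 := by
      funext j
      have := congrFun hy j
      rw [hc, polyOp_C_apply] at this
      have : p.coeff 0 * y j = 0 := this
      exact (mul_eq_zero.mp this).resolve_left hc0
    rw [this]
    exact tendsto_const_nhds
  | succ N ih =>
    intro p hdeg hp hroot y hy
    by_cases hle : p.natDegree ≤ N
    · exact ih p hle hp hroot y hy
    · have hdeg' : 0 < p.natDegree := by omega
      obtain ⟨μ, hμ⟩ := Complex.exists_root ((Polynomial.natDegree_pos_iff_degree_pos).mp hdeg')
      obtain ⟨e, he⟩ := Polynomial.dvd_iff_isRoot.mpr hμ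
      have he0 : e ≠ 0 := fun h => hp (by rw [he, h, mul_zero])
      have hXC : (Polynomial.X - Polynomial.C μ) ≠ (0 : ℂ[X]) := Polynomial.X_sub_C_ne_zero μ
      have hdeg_e : e.natDegree ≤ N := by
        have := Polynomial.natDegree_mul hXC he0
        rw [← he, Polynomial.natDegree_X_sub_C] at this
        omega
      set z := polyOp (Polynomial.X - Polynomial.C μ) y with hzdef
      have hz0 : polyOp e z = 0 := by
        have : p = e * (Polynomial.X - Polynomial.C μ) := by rw [he]; ring
        calc polyOp e z = polyOp (e * (Polynomial.X - Polynomial.C μ)) y := by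
              unfold polyOp
              rw [_root_.map_mul]
              rfl
          _ = polyOp p y := by rw [← this]
          _ = 0 := hy
      have hroote : ∀ μ' : ℂ, e.eval μ' = 0 → ‖μ'‖ < 1 := by
        intro μ' hμ'
        exact hroot μ' (by rw [he, Polynomial.eval_mul, hμ', mul_zero])
      have hz := ih e hdeg_e he0 hroote z hz0
      have hrec : ∀ j, y (j + 1) = μ * y j + z j := by
        intro j
        have : z j = y (j + 1) - μ * y j := by
          rw [hzdef]
          rw [polyOp, map_sub]
          show polyOp Polynomial.X y j - polyOp (Polynomial.C μ) y j = _
          rw [polyOp_X_apply, polyOp_C_apply]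
          rfl
        rw [this]
        ring
      have habs : ‖μ‖ < 1 := hroot μ hμ
      exact tendsto_of_recurrence habs y z hz hrec

lemma tendsto_zero_of_polyOp (p : ℂ[X]) (hp : p ≠ 0)
    (hroot : ∀ μ : ℂ, p.eval μ = 0 → ‖μ‖ < 1) (y : ℕ → ℂ)
    (hy : polyOp p y = 0) : Tendsto y atTop (nhds 0) :=
  tendsto_zero_of_polyOp_aux p.natDegree p le_rfl hp hroot y hy

lemma polyOp_tendsto (p : ℂ[X]) (y : ℕ → ℂ) (hy : Tendsto y atTop (nhds 0)) :
    Tendsto (polyOp p y) atTop (nhds 0) := by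
  have hrw : polyOp p y = fun j => ∑ k ∈ Finset.range (p.natDegree + 1), p.coeff k * y (j + k) :=
    funext (polyOp_apply p y)
  rw [hrw]
  have := tendsto_finset_sum (Finset.range (p.natDegree + 1))
    (f := fun (k : ℕ) (j : ℕ) => p.coeff k * y (j + k)) (a := fun _ => (0 : ℂ))
    (fun k _ => by
      simpa using (hy.comp (tendsto_add_atTop_nat k)).const_mul (p.coeff k))
  simpa using this

section MApply

variable {ι κ τ : Type*} [Fintype ι] [Fintype κ] [Fintype τ]

/-- Action of a polynomial matrix on a family of sequences. -/
def MApply (M : Matrix κ ι ℂ[X]) (w : ι → ℕ → ℂ) : κ → ℕ → ℂ :=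
  fun i => ∑ s, polyOp (M i s) (w s)

lemma MApply_zero (M : Matrix κ ι ℂ[X]) : MApply M 0 = 0 := by
  funext i
  show ∑ s, polyOp (M i s) ((0 : ι → ℕ → ℂ) s) = 0
  simp [polyOp_zero_fn]

lemma MApply_mul (M : Matrix κ ι ℂ[X]) (N : Matrix ι τ ℂ[X]) (w : τ → ℕ → ℂ) :
    MApply (M * N) w = MApply M (MApply N w) := by
  funext i
  show ∑ t, polyOp ((M * N) i t) (w t) = ∑ s, polyOp (M i s) (∑ t, polyOp (N s t) (w t))
  have h1 : ∀ s, polyOp (M i s) (∑ t, polyOp (N s t) (w t))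
      = ∑ t, polyOp (M i s) (polyOp (N s t) (w t)) := fun s => map_sum (polyOp (M i s)) _ _
  rw [Finset.sum_congr rfl fun s _ => h1 s, Finset.sum_comm]
  refine Finset.sum_congr rfl fun t _ => ?_
  rw [Matrix.mul_apply]
  have h2 : polyOp (∑ s, M i s * N s t) = ∑ s, polyOp (M i s) * polyOp (N s t) := by
    unfold polyOp
    rw [map_sum]
    exact Finset.sum_congr rfl fun s _ => _root_.map_mul _ _ _
  rw [h2, LinearMap.sum_apply]
  rfl

lemma MApply_one [DecidableEq ι] (w : ι → ℕ → ℂ) : MApply (1 : Matrix ι ι ℂ[X]) w = w := by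
  funext s
  show ∑ t, polyOp ((1 : Matrix ι ι ℂ[X]) s t) (w t) = w s
  rw [Finset.sum_eq_single s]
  · rw [Matrix.one_apply_eq]
    unfold polyOp
    rw [_root_.map_one]
    rfl
  · intro t _ hts
    rw [Matrix.one_apply_ne (Ne.symm hts)]
    unfold polyOp
    rw [map_zero]
    rfl
  · simp

lemma MApply_sub (M : Matrix κ ι ℂ[X]) (w w' : ι → ℕ → ℂ) :
    MApply M (w - w') = MApply M w - MApply M w' := by
  funext i
  show ∑ s, polyOp (M i s) ((w - w') s) = _
  have h1 : ∀ s, (w - w') s = w s - w' s := fun s => rfl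
  calc ∑ s, polyOp (M i s) ((w - w') s) = ∑ s, (polyOp (M i s) (w s) - polyOp (M i s) (w' s)) := by
        refine Finset.sum_congr rfl fun s _ => ?_
        rw [h1, map_sub]
    _ = _ := by
        rw [Finset.sum_sub_distrib]
        rfl

/-- Uniform degree bound of a polynomial matrix. -/
def matDeg (M : Matrix κ ι ℂ[X]) : ℕ :=
  Finset.sup Finset.univ fun i : κ => Finset.sup Finset.univ fun s : ι => (M i s).natDegree

lemma matDeg_le (M : Matrix κ ι ℂ[X]) (i : κ) (s : ι) : (M i s).natDegree ≤ matDeg M := by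
  have h1 : (M i s).natDegree ≤ Finset.sup Finset.univ fun s : ι => (M i s).natDegree :=
    Finset.le_sup (f := fun s : ι => (M i s).natDegree) (Finset.mem_univ s)
  have h2 : (Finset.sup Finset.univ fun s : ι => (M i s).natDegree) ≤ matDeg M :=
    Finset.le_sup (f := fun i : κ => Finset.sup Finset.univ fun s : ι => (M i s).natDegree)
      (Finset.mem_univ i)
  exact le_trans h1 h2

lemma MApply_congr_window (M : Matrix κ ι ℂ[X]) (w w' : ι → ℕ → ℂ) (j : ℕ)
    (h : ∀ s, ∀ t ≤ j + matDeg M, w s t = w' s t) (i : κ) :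
    MApply M w i j = MApply M w' i j := by
  show (∑ s, polyOp (M i s) (w s)) j = (∑ s, polyOp (M i s) (w' s)) j
  rw [Finset.sum_apply, Finset.sum_apply]
  refine Finset.sum_congr rfl fun s _ => ?_
  refine polyOp_congr_window _ _ _ _ fun k hk => ?_
  exact h s (j + k) (by have := matDeg_le M i s; omega)

lemma MApply_geom (M : Matrix κ ι ℂ[X]) (l : ℂ) (c : ι → ℂ) :
    MApply M (fun s j => c s * l ^ j)
      = fun i j => ((M.map (Polynomial.eval l)) *ᵥ c) i * l ^ j := by
  funext i j
  show (∑ s, polyOp (M i s) (fun j => c s * l ^ j)) j = _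
  rw [Finset.sum_apply]
  have h1 : ∀ s, polyOp (M i s) (fun j => c s * l ^ j) j = (((M i s).eval l) * c s) * l ^ j :=
    fun s => congrFun (polyOp_geom (M i s) (c s) l) j
  rw [Finset.sum_congr rfl fun s _ => h1 s]
  simp [Matrix.mulVec, dotProduct, Finset.sum_mul, Matrix.map_apply]

/-- Delay a family of sequences by `K` steps, padding with zeros. -/
def delaySeq (K : ℕ) (w : ι → ℕ → ℂ) : ι → ℕ → ℂ := fun s j => if j < K then 0 else w s (j - K)

lemma polyOp_delay (p : ℂ[X]) (z : ℕ → ℂ) (K j : ℕ) :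
    polyOp p (fun t => if t < K then 0 else z (t - K)) (K + j) = polyOp p z j := by
  rw [polyOp_apply, polyOp_apply]
  refine Finset.sum_congr rfl fun k _ => ?_
  congr 1
  rw [if_neg (by omega)]
  congr 1
  omega

lemma MApply_delay (M : Matrix κ ι ℂ[X]) (w : ι → ℕ → ℂ) (K : ℕ) (i : κ) (j : ℕ) :
    MApply M (delaySeq K w) i (K + j) = MApply M w i j := by
  show (∑ s, polyOp (M i s) (delaySeq K w s)) (K + j) = (∑ s, polyOp (M i s) (w s)) j
  rw [Finset.sum_apply, Finset.sum_apply]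
  exact Finset.sum_congr rfl fun s _ => polyOp_delay (M i s) (w s) K j

lemma MApply_delay_early (M : Matrix κ ι ℂ[X]) (w : ι → ℕ → ℂ) (K : ℕ) (i : κ) (j : ℕ)
    (h : j + matDeg M < K) : MApply M (delaySeq K w) i j = 0 := by
  show (∑ s, polyOp (M i s) (delaySeq K w s)) j = 0
  rw [Finset.sum_apply]
  refine Finset.sum_eq_zero fun s _ => ?_
  refine polyOp_window_zero _ _ _ fun k hk => ?_
  show (if j + k < K then 0 else w s (j + k - K)) = 0
  rw [if_pos (by have := matDeg_le M i s; omega)]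

lemma MApply_tendsto (M : Matrix κ ι ℂ[X]) (w : ι → ℕ → ℂ)
    (hw : ∀ s, Tendsto (w s) atTop (nhds 0)) (i : κ) :
    Tendsto (MApply M w i) atTop (nhds 0) := by
  have h1 : MApply M w i = fun j => ∑ s, polyOp (M i s) (w s) j :=
    funext fun j => Finset.sum_apply _ _ _
  rw [h1]
  simpa using tendsto_finset_sum Finset.univ
    (f := fun (s : ι) (j : ℕ) => polyOp (M i s) (w s) j) (a := fun _ => (0 : ℂ))
    (fun s _ => polyOp_tendsto (M i s) (w s) (hw s))

end MApply

section Smith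

variable {α β : Type*} [Fintype α] [Fintype β] [DecidableEq α] [DecidableEq β]

/-- The rectangular pseudo-diagonal matrix of a Smith-type decomposition. -/
def smithD (k r : ℕ) (f : Fin r ↪ α) (d : Fin r → ℂ[X]) :
    Matrix α (Fin k ⊕ Fin r) ℂ[X] :=
  Matrix.of fun i s => Sum.elim (fun _ : Fin k => (0 : ℂ[X])) (fun t => if i = f t then d t else 0) s

/-- Smith-type decomposition of a polynomial matrix, obtained from the Smith normal
form of the range submodule over the PID `ℂ[X]`. -/
theorem smith_exists (P : Matrix α β ℂ[X]) :
    ∃ (k r : ℕ) (U U' : Matrix α α ℂ[X])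
      (V : Matrix (Fin k ⊕ Fin r) β ℂ[X]) (V' : Matrix β (Fin k ⊕ Fin r) ℂ[X])
      (f : Fin r ↪ α) (d : Fin r → ℂ[X]),
      U * U' = 1 ∧ U' * U = 1 ∧ V * V' = 1 ∧ V' * V = 1 ∧ (∀ t, d t ≠ 0) ∧
      P = U * smithD k r f d * V := by
  classical
  set φ : (β → ℂ[X]) →ₗ[ℂ[X]] (α → ℂ[X]) := P.mulVecLin with hφ
  obtain ⟨r, snf⟩ := Submodule.smithNormalForm (Pi.basisFun ℂ[X] α) (LinearMap.range φ)
  obtain ⟨k, bK⟩ := Submodule.basisOfPid (Pi.basisFun ℂ[X] β) (LinearMap.ker φ)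
  haveI : Module.Free ℂ[X] (LinearMap.range φ) := Module.Free.of_basis snf.bN
  obtain ⟨sec, hsec⟩ := Module.projective_lifting_property φ.rangeRestrict LinearMap.id
    φ.surjective_rangeRestrict
  have hrr : ∀ x : β → ℂ[X], (φ.rangeRestrict x : α → ℂ[X]) = φ x := fun x => rfl
  have hφsec : ∀ yy : LinearMap.range φ, φ (sec yy) = (yy : α → ℂ[X]) := by
    intro yy
    have h1 : φ.rangeRestrict (sec yy) = yy := by
      have := congrArg (fun g => g yy) (congrArg DFunLike.coe hsec)
      exact this
    rw [← hrr, h1]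
  -- the splitting equivalence
  let F1 : (β → ℂ[X]) →ₗ[ℂ[X]] LinearMap.ker φ :=
    LinearMap.codRestrict (LinearMap.ker φ) (LinearMap.id - sec ∘ₗ φ.rangeRestrict)
      (by
        intro x
        rw [LinearMap.mem_ker]
        have : φ (x - sec (φ.rangeRestrict x)) = φ x - φ (sec (φ.rangeRestrict x)) := map_sub φ _ _
        simpa [this, hφsec] using sub_self (φ x))
  let F : (β → ℂ[X]) →ₗ[ℂ[X]] (LinearMap.ker φ × LinearMap.range φ) :=
    F1.prod φ.rangeRestrict
  let G : (LinearMap.ker φ × LinearMap.range φ) →ₗ[ℂ[X]] (β → ℂ[X]) :=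
    (LinearMap.ker φ).subtype ∘ₗ LinearMap.fst ℂ[X] _ _ + sec ∘ₗ LinearMap.snd ℂ[X] _ _
  have hGF : G ∘ₗ F = LinearMap.id := by
    refine LinearMap.ext fun x => ?_
    show (F1 x : β → ℂ[X]) + sec (φ.rangeRestrict x) = x
    show (x - sec (φ.rangeRestrict x)) + sec (φ.rangeRestrict x) = x
    abel
  have hrrker : ∀ aa : LinearMap.ker φ, φ.rangeRestrict (aa : β → ℂ[X]) = 0 := by
    intro aa
    apply Subtype.ext
    rw [hrr]
    simpa using aa.2
  have hrrG : ∀ ab : LinearMap.ker φ × LinearMap.range φ, φ.rangeRestrict (G ab) = ab.2 := by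
    intro ab
    show φ.rangeRestrict ((ab.1 : β → ℂ[X]) + sec ab.2) = ab.2
    rw [map_add, hrrker]
    rw [zero_add]
    apply Subtype.ext
    rw [hrr, hφsec]
  have hFG : F ∘ₗ G = LinearMap.id := by
    refine LinearMap.ext fun ab => ?_
    have h2 : φ.rangeRestrict (G ab) = ab.2 := hrrG ab
    refine Prod.ext ?_ ?_
    · apply Subtype.ext
      show (G ab - sec (φ.rangeRestrict (G ab)) : β → ℂ[X]) = (ab.1 : β → ℂ[X])
      rw [h2]
      show ((ab.1 : β → ℂ[X]) + sec ab.2) - sec ab.2 = (ab.1 : β → ℂ[X])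
      abel
    · exact h2
  let e : (β → ℂ[X]) ≃ₗ[ℂ[X]] (LinearMap.ker φ × LinearMap.range φ) :=
    LinearEquiv.ofLinear F G hFG hGF
  let bD : Module.Basis (Fin k ⊕ Fin r) ℂ[X] (β → ℂ[X]) := (bK.prod snf.bN).map e.symm
  refine ⟨k, r, LinearMap.toMatrix snf.bM (Pi.basisFun ℂ[X] α) LinearMap.id,
    LinearMap.toMatrix (Pi.basisFun ℂ[X] α) snf.bM LinearMap.id,
    LinearMap.toMatrix (Pi.basisFun ℂ[X] β) bD LinearMap.id,
    LinearMap.toMatrix bD (Pi.basisFun ℂ[X] β) LinearMap.id,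
    snf.f, snf.a, ?_, ?_, ?_, ?_, ?_, ?_⟩
  · rw [← LinearMap.toMatrix_comp (Pi.basisFun ℂ[X] α) snf.bM (Pi.basisFun ℂ[X] α)
      LinearMap.id LinearMap.id, LinearMap.id_comp, LinearMap.toMatrix_id]
  · rw [← LinearMap.toMatrix_comp snf.bM (Pi.basisFun ℂ[X] α) snf.bM
      LinearMap.id LinearMap.id, LinearMap.id_comp, LinearMap.toMatrix_id]
  · rw [← LinearMap.toMatrix_comp bD (Pi.basisFun ℂ[X] β) bD
      LinearMap.id LinearMap.id, LinearMap.id_comp, LinearMap.toMatrix_id]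
  · rw [← LinearMap.toMatrix_comp (Pi.basisFun ℂ[X] β) bD (Pi.basisFun ℂ[X] β)
      LinearMap.id LinearMap.id, LinearMap.id_comp, LinearMap.toMatrix_id]
  · -- d t ≠ 0
    intro t
    intro hdt
    have h1 := snf.snf t
    rw [hdt, zero_smul] at h1
    exact Module.Basis.ne_zero snf.bN t (Subtype.ext h1)
  · -- the factorization
    have hDelta : LinearMap.toMatrix bD snf.bM φ = smithD k r snf.f snf.a := by
      apply Matrix.ext
      intro i s
      rw [LinearMap.toMatrix_apply]
      have hbD : ∀ s, bD s = G ((bK.prod snf.bN) s) := by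
        intro s
        show ((bK.prod snf.bN).map e.symm) s = _
        rw [Module.Basis.map_apply]
        exact LinearEquiv.ofLinear_symm_apply F G (x := (bK.prod snf.bN) s)
      cases s with
      | inl a =>
        have h1 : (bK.prod snf.bN) (Sum.inl a) = (bK a, 0) := by
          simp [Module.Basis.prod_apply]
        have h2 : φ (bD (Sum.inl a)) = 0 := by
          rw [hbD, h1]
          show φ ((bK a : β → ℂ[X]) + sec 0) = 0
          rw [map_zero, add_zero]
          simpa using (bK a).2
        rw [h2]
        simp [smithD]
      | inr t =>
        have h1 : (bK.prod snf.bN) (Sum.inr t) = (0, snf.bN t) := by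
          simp [Module.Basis.prod_apply]
        have h2 : φ (bD (Sum.inr t)) = snf.a t • snf.bM (snf.f t) := by
          rw [hbD, h1]
          show φ (((0 : LinearMap.ker φ) : β → ℂ[X]) + sec (snf.bN t)) = _
          rw [Submodule.coe_zero, zero_add, hφsec]
          exact snf.snf t
        rw [h2, _root_.map_smul]
        show (snf.a t • snf.bM.repr (snf.bM (snf.f t))) i = _
        rw [Module.Basis.repr_self]
        show snf.a t * (Finsupp.single (snf.f t) 1) i = (if i = snf.f t then snf.a t else 0)
        rw [Finsupp.single_apply]
        by_cases h : i = snf.f t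
        · simp [h]
        · rw [if_neg h, if_neg (fun hh => h hh.symm), mul_zero]
    have hPmat : P = LinearMap.toMatrix (Pi.basisFun ℂ[X] β) (Pi.basisFun ℂ[X] α) φ :=
      (LinearMap.toMatrix'_toLin' P).symm
    calc P = LinearMap.toMatrix (Pi.basisFun ℂ[X] β) (Pi.basisFun ℂ[X] α) φ := hPmat
      _ = LinearMap.toMatrix (Pi.basisFun ℂ[X] β) (Pi.basisFun ℂ[X] α)
            (LinearMap.id ∘ₗ (φ ∘ₗ LinearMap.id)) := by
          rw [LinearMap.id_comp, LinearMap.comp_id]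
      _ = LinearMap.toMatrix snf.bM (Pi.basisFun ℂ[X] α) LinearMap.id *
            LinearMap.toMatrix (Pi.basisFun ℂ[X] β) snf.bM (φ ∘ₗ LinearMap.id) :=
          LinearMap.toMatrix_comp _ snf.bM _ LinearMap.id (φ ∘ₗ LinearMap.id)
      _ = LinearMap.toMatrix snf.bM (Pi.basisFun ℂ[X] α) LinearMap.id *
            (LinearMap.toMatrix bD snf.bM φ *
              LinearMap.toMatrix (Pi.basisFun ℂ[X] β) bD LinearMap.id) := by
          rw [LinearMap.toMatrix_comp (Pi.basisFun ℂ[X] β) bD snf.bM φ LinearMap.id]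
      _ = _ := by rw [hDelta, Matrix.mul_assoc]

end Smith

section Behavior

variable {n m q : ℕ} (E A : Matrix (Fin n) (Fin n) ℂ) (B : Matrix (Fin n) (Fin m) ℂ)
  (C : Matrix (Fin q) (Fin n) ℂ) (D : Matrix (Fin q) (Fin m) ℂ)

/-- The system pencil `R(z)` as a polynomial matrix. -/
def Rpoly : Matrix (Fin n ⊕ Fin q) (Fin n ⊕ Fin m) ℂ[X] :=
  fromBlocks ((X : ℂ[X]) • E.map ⇑(Polynomial.C (R := ℂ)) - A.map ⇑(Polynomial.C (R := ℂ)))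
    (-(B.map ⇑(Polynomial.C (R := ℂ)))) (C.map ⇑(Polynomial.C (R := ℂ)))
    (D.map ⇑(Polynomial.C (R := ℂ)))

/-- The stacked trajectory as a family of sequences. -/
def wSeq {n m : ℕ} (x : ℕ → Fin n → ℂ) (u : ℕ → Fin m → ℂ) : (Fin n ⊕ Fin m) → ℕ → ℂ :=
  fun s j => Sum.elim (x j) (u j) s

lemma polyOp_lin (a b : ℂ) (y : ℕ → ℂ) (j : ℕ) :
    polyOp (Polynomial.X * Polynomial.C a - Polynomial.C b) y j = a * y (j + 1) - b * y j := by
  unfold polyOp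
  rw [map_sub, _root_.map_mul]
  show (Polynomial.aeval shiftL Polynomial.X) ((Polynomial.aeval shiftL (Polynomial.C a)) y) j
      - (Polynomial.aeval shiftL (Polynomial.C b)) y j = _
  rw [Polynomial.aeval_X, Polynomial.aeval_C, Polynomial.aeval_C]
  rfl

lemma polyOp_negC (b : ℂ) (y : ℕ → ℂ) (j : ℕ) :
    polyOp (-(Polynomial.C b)) y j = -(b * y j) := by
  unfold polyOp
  rw [map_neg, Polynomial.aeval_C]
  rfl

lemma polyOp_Cc (b : ℂ) (y : ℕ → ℂ) (j : ℕ) :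
    polyOp (Polynomial.C b) y j = b * y j := by
  unfold polyOp
  rw [Polynomial.aeval_C]
  rfl

lemma MApply_Rpoly_inl (x : ℕ → Fin n → ℂ) (u : ℕ → Fin m → ℂ) (i : Fin n) (j : ℕ) :
    MApply (Rpoly E A B C D) (wSeq x u) (Sum.inl i) j
      = (E *ᵥ x (j + 1)) i - ((A *ᵥ x j) i + (B *ᵥ u j) i) := by
  show (∑ s, polyOp (Rpoly E A B C D (Sum.inl i) s) (wSeq x u s)) j = _
  rw [Finset.sum_apply, Fintype.sum_sum_type]
  have h1 : ∀ i' : Fin n, polyOp (Rpoly E A B C D (Sum.inl i) (Sum.inl i'))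
      (wSeq x u (Sum.inl i')) j = E i i' * x (j + 1) i' - A i i' * x j i' := by
    intro i'
    have he : Rpoly E A B C D (Sum.inl i) (Sum.inl i')
        = Polynomial.X * Polynomial.C (E i i') - Polynomial.C (A i i') := by
      show ((X : ℂ[X]) • E.map ⇑(Polynomial.C (R := ℂ)) - A.map ⇑(Polynomial.C (R := ℂ))) i i' = _
      rw [Matrix.sub_apply, Matrix.smul_apply, Matrix.map_apply, Matrix.map_apply]
      rw [smul_eq_mul]
    rw [he, polyOp_lin]
    rfl
  have h2 : ∀ i' : Fin m, polyOp (Rpoly E A B C D (Sum.inl i) (Sum.inr i'))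
      (wSeq x u (Sum.inr i')) j = -(B i i' * u j i') := by
    intro i'
    have he : Rpoly E A B C D (Sum.inl i) (Sum.inr i') = -(Polynomial.C (B i i')) := by
      show (-(B.map ⇑(Polynomial.C (R := ℂ)))) i i' = _
      rw [Matrix.neg_apply, Matrix.map_apply]
    rw [he, polyOp_negC]
    rfl
  rw [Finset.sum_congr rfl fun i' _ => h1 i', Finset.sum_congr rfl fun i' _ => h2 i']
  rw [Finset.sum_sub_distrib, Finset.sum_neg_distrib]
  show _ = ∑ i', E i i' * x (j+1) i' - (∑ i', A i i' * x j i' + ∑ i', B i i' * u j i')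
  ring

lemma MApply_Rpoly_inr (x : ℕ → Fin n → ℂ) (u : ℕ → Fin m → ℂ) (i : Fin q) (j : ℕ) :
    MApply (Rpoly E A B C D) (wSeq x u) (Sum.inr i) j
      = (C *ᵥ x j) i + (D *ᵥ u j) i := by
  show (∑ s, polyOp (Rpoly E A B C D (Sum.inr i) s) (wSeq x u s)) j = _
  rw [Finset.sum_apply, Fintype.sum_sum_type]
  have h1 : ∀ i' : Fin n, polyOp (Rpoly E A B C D (Sum.inr i) (Sum.inl i'))
      (wSeq x u (Sum.inl i')) j = C i i' * x j i' := by
    intro i'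
    have he : Rpoly E A B C D (Sum.inr i) (Sum.inl i') = Polynomial.C (C i i') := rfl
    rw [he, polyOp_Cc]
    rfl
  have h2 : ∀ i' : Fin m, polyOp (Rpoly E A B C D (Sum.inr i) (Sum.inr i'))
      (wSeq x u (Sum.inr i')) j = D i i' * u j i' := by
    intro i'
    have he : Rpoly E A B C D (Sum.inr i) (Sum.inr i') = Polynomial.C (D i i') := rfl
    rw [he, polyOp_Cc]
    rfl
  rw [Finset.sum_congr rfl fun i' _ => h1 i', Finset.sum_congr rfl fun i' _ => h2 i']
  rfl

lemma isZeroDyn_iff (x : ℕ → Fin n → ℂ) (u : ℕ → Fin m → ℂ) :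
    IsZeroDyn E A B C D x u ↔ MApply (Rpoly E A B C D) (wSeq x u) = 0 := by
  constructor
  · intro h
    funext s j
    cases s with
    | inl i =>
      rw [MApply_Rpoly_inl]
      have := congrFun (h j).1 i
      have h2 : (A *ᵥ x j + B *ᵥ u j) i = (A *ᵥ x j) i + (B *ᵥ u j) i := rfl
      rw [h2] at this
      show _ = (0 : ℂ)
      rw [this]
      ring
    | inr i =>
      rw [MApply_Rpoly_inr]
      exact congrFun (h j).2 i
  · intro h j
    constructor
    · funext i
      have := congrFun (congrFun h (Sum.inl i)) j
      rw [MApply_Rpoly_inl] at this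
      have h3 : (0 : (Fin n ⊕ Fin q) → ℕ → ℂ) (Sum.inl i) j = 0 := rfl
      rw [h3] at this
      have h2 : (A *ᵥ x j + B *ᵥ u j) i = (A *ᵥ x j) i + (B *ᵥ u j) i := rfl
      rw [h2]
      linear_combination this
    · funext i
      have := congrFun (congrFun h (Sum.inr i)) j
      rw [MApply_Rpoly_inr] at this
      exact this

/-- Delay a trajectory by `K` steps. -/
def delayTraj {d : ℕ} (K : ℕ) (x : ℕ → Fin d → ℂ) : ℕ → Fin d → ℂ :=
  fun j => if j < K then 0 else x (j - K)

lemma wSeq_delay (K : ℕ) (x : ℕ → Fin n → ℂ) (u : ℕ → Fin m → ℂ) :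
    wSeq (delayTraj K x) (delayTraj K u) = delaySeq K (wSeq x u) := by
  funext s j
  cases s with
  | inl i =>
    show (delayTraj K x j) i = (if j < K then 0 else x (j - K) i)
    unfold delayTraj
    by_cases h : j < K <;> simp [h]
  | inr i =>
    show (delayTraj K u j) i = (if j < K then 0 else u (j - K) i)
    unfold delayTraj
    by_cases h : j < K <;> simp [h]

lemma delay_isZeroDyn (K : ℕ) (x : ℕ → Fin n → ℂ) (u : ℕ → Fin m → ℂ)
    (h : IsZeroDyn E A B C D x u) (h0 : E *ᵥ x 0 = 0) :
    IsZeroDyn E A B C D (delayTraj K x) (delayTraj K u) := by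
  intro j
  unfold delayTraj
  by_cases hj1 : j + 1 < K
  · rw [if_pos hj1, if_pos (by omega), if_pos (by omega)]
    constructor
    · rw [Matrix.mulVec_zero, Matrix.mulVec_zero, Matrix.mulVec_zero, add_zero]
    · rw [Matrix.mulVec_zero, Matrix.mulVec_zero, add_zero]
  · by_cases hj2 : j < K
    · -- j + 1 = K
      have hK : j + 1 = K := by omega
      rw [if_neg (by omega), if_pos hj2, if_pos hj2]
      constructor
      · rw [Matrix.mulVec_zero, Matrix.mulVec_zero, add_zero]
        rw [show j + 1 - K = 0 by omega]
        exact h0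
      · rw [Matrix.mulVec_zero, Matrix.mulVec_zero, add_zero]
    · rw [if_neg (by omega), if_neg hj2, if_neg hj2]
      rw [show j + 1 - K = (j - K) + 1 by omega]
      exact h (j - K)

end Behavior

section Rank

variable {α β γ : Type*} [Fintype α] [Fintype β] [Fintype γ]
  [DecidableEq α] [DecidableEq β] [DecidableEq γ]
variable {K : Type*} [Field K] [DecidableEq K]

lemma rank_mul_left_inv (U U' : Matrix α α K) (hU'U : U' * U = 1) (M : Matrix α β K) :
    (U * M).rank = M.rank := by
  refine le_antisymm (Matrix.rank_mul_le_right U M) ?_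
  have h1 : M = U' * (U * M) := by rw [← Matrix.mul_assoc, hU'U, Matrix.one_mul]
  calc M.rank = (U' * (U * M)).rank := by rw [← h1]
    _ ≤ (U * M).rank := Matrix.rank_mul_le_right U' (U * M)

lemma rank_mul_right_inv (V : Matrix γ β K) (V' : Matrix β γ K) (hVV' : V * V' = 1)
    (M : Matrix α γ K) : (M * V).rank = M.rank := by
  refine le_antisymm (Matrix.rank_mul_le_left M V) ?_
  have h1 : M = (M * V) * V' := by rw [Matrix.mul_assoc, hVV', Matrix.mul_one]
  calc M.rank = ((M * V) * V').rank := by rw [← h1]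
    _ ≤ (M * V).rank := Matrix.rank_mul_le_left (M * V) V'

/-- Rank of the mapped pseudo-diagonal matrix. -/
lemma rank_smithD_map (k r : ℕ) (f : Fin r ↪ α) (d : Fin r → ℂ[X]) (g : ℂ[X] →+* K) :
    ((smithD (α := α) k r f d).map g).rank = Fintype.card {t : Fin r // g (d t) ≠ 0} := by
  have hcol : ∀ s : Fin k ⊕ Fin r, ((smithD (α := α) k r f d).map g)ᵀ s =
      Sum.elim (fun _ : Fin k => (0 : α → K))
        (fun t => (g (d t) • (Pi.single (f t) (1 : K) : α → K) : α → K)) s := by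
    intro s
    funext i
    cases s with
    | inl a =>
      show g (smithD k r f d i (Sum.inl a)) = (0 : α → K) i
      show g 0 = 0
      exact map_zero g
    | inr t =>
      show g (smithD k r f d i (Sum.inr t)) = g (d t) * (Pi.single (f t) (1 : K) : α → K) i
      show g (if i = f t then d t else 0) = _
      by_cases h : i = f t
      · rw [if_pos h, h, Pi.single_eq_same, mul_one]
      · rw [if_neg h, Pi.single_eq_of_ne h, mul_zero, map_zero]
  rw [Matrix.rank, Matrix.range_mulVecLin]
  have hspan : Submodule.span K (Set.range ((smithD (α := α) k r f d).map g)ᵀ)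
      = Submodule.span K (Set.range fun t : {t : Fin r // g (d t) ≠ 0} =>
          (Pi.single (f t.1) (1 : K) : α → K)) := by
    apply le_antisymm
    · rw [Submodule.span_le]
      rintro v ⟨s, rfl⟩
      rw [hcol]
      cases s with
      | inl a => exact Submodule.zero_mem _
      | inr t =>
        show (g (d t) • (Pi.single (f t) (1:K) : α → K) : α → K) ∈ _
        by_cases h : g (d t) = 0
        · rw [h, zero_smul]; exact Submodule.zero_mem _
        · exact Submodule.smul_mem _ _ (Submodule.subset_span ⟨⟨t, h⟩, rfl⟩)
    · rw [Submodule.span_le]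
      rintro v ⟨t, rfl⟩
      have h1 : (Pi.single (f t.1) (1 : K) : α → K)
          = (g (d t.1))⁻¹ • (((smithD (α := α) k r f d).map g)ᵀ (Sum.inr t.1)) := by
        rw [hcol]
        show (Pi.single (f t.1) (1 : K) : α → K)
            = (g (d t.1))⁻¹ • (g (d t.1) • (Pi.single (f t.1) (1 : K) : α → K))
        rw [smul_smul, inv_mul_cancel₀ t.2, one_smul]
      show (Pi.single (f t.1) (1 : K) : α → K) ∈ _
      rw [h1]
      exact Submodule.smul_mem _ _ (Submodule.subset_span ⟨Sum.inr t.1, rfl⟩)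
  change Module.finrank K (Submodule.span K (Set.range ((smithD (α := α) k r f d).map g)ᵀ)) = _
  rw [hspan]
  refine finrank_span_eq_card ?_
  have hind := (Pi.basisFun K α).linearIndependent
  have hcomp : (fun t : {t : Fin r // g (d t) ≠ 0} => (Pi.single (f t.1) (1 : K) : α → K))
      = (⇑(Pi.basisFun K α)) ∘ (fun t => f t.1) := by
    funext t
    rw [Function.comp_apply, Pi.basisFun_apply]
  rw [hcomp]
  exact hind.comp _ (fun t t' h => Subtype.ext (f.injective h))

/-- Rank of a mapped matrix via its Smith-type decomposition. -/
lemma rank_map_of_smith (P : Matrix α β ℂ[X]) (k r : ℕ)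
    (U U' : Matrix α α ℂ[X]) (V : Matrix (Fin k ⊕ Fin r) β ℂ[X])
    (V' : Matrix β (Fin k ⊕ Fin r) ℂ[X]) (f : Fin r ↪ α) (d : Fin r → ℂ[X])
    (hU'U : U' * U = 1) (hVV' : V * V' = 1)
    (hP : P = U * smithD k r f d * V) (g : ℂ[X] →+* K) :
    (P.map g).rank = Fintype.card {t : Fin r // g (d t) ≠ 0} := by
  have hmap : P.map g = (U.map g) * ((smithD (α := α) k r f d).map g) * (V.map g) := by
    rw [hP, Matrix.map_mul, Matrix.map_mul]
  have hU'Ug : (U'.map g) * (U.map g) = 1 := by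
    rw [← Matrix.map_mul, hU'U, Matrix.map_one g (map_zero g) (map_one g)]
  have hVV'g : (V.map g) * (V'.map g) = 1 := by
    rw [← Matrix.map_mul, hVV', Matrix.map_one g (map_zero g) (map_one g)]
  rw [hmap, rank_mul_right_inv (V.map g) (V'.map g) hVV'g, rank_mul_left_inv (U.map g) (U'.map g) hU'Ug]
  exact rank_smithD_map k r f d g

end Rank


section SmithApply

variable {α : Type*} [Fintype α] [DecidableEq α]

lemma polyOp_zero_poly (y : ℕ → ℂ) : polyOp (0 : ℂ[X]) y = 0 := by
  unfold polyOp
  rw [map_zero]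
  rfl

lemma MApply_smithD_row (k r : ℕ) (f : Fin r ↪ α) (d : Fin r → ℂ[X])
    (v : (Fin k ⊕ Fin r) → ℕ → ℂ) (t : Fin r) :
    MApply (smithD k r f d) v (f t) = polyOp (d t) (v (Sum.inr t)) := by
  show ∑ s, polyOp (smithD k r f d (f t) s) (v s) = _
  rw [Fintype.sum_sum_type]
  have h1 : ∀ a : Fin k, polyOp (smithD k r f d (f t) (Sum.inl a)) (v (Sum.inl a)) = 0 := by
    intro a
    show polyOp 0 (v (Sum.inl a)) = 0
    exact polyOp_zero_poly _
  rw [Finset.sum_congr rfl fun a _ => h1 a, Finset.sum_const_zero, zero_add]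
  rw [Finset.sum_eq_single t]
  · show polyOp (if f t = f t then d t else 0) _ = _
    rw [if_pos rfl]
  · intro t' _ htt'
    show polyOp (if f t = f t' then d t' else 0) _ = 0
    rw [if_neg (fun h => htt' (f.injective h).symm)]
    exact polyOp_zero_poly _
  · intro h
    exact absurd (Finset.mem_univ t) h

lemma MApply_smithD_zero (k r : ℕ) (f : Fin r ↪ α) (d : Fin r → ℂ[X])
    (v : (Fin k ⊕ Fin r) → ℕ → ℂ) (hall : ∀ t, polyOp (d t) (v (Sum.inr t)) = 0) :
    MApply (smithD k r f d) v = 0 := by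
  funext i
  show ∑ s, polyOp (smithD k r f d i s) (v s) = (0 : (α → ℕ → ℂ)) i
  refine Finset.sum_eq_zero fun s _ => ?_
  cases s with
  | inl a => exact polyOp_zero_poly _
  | inr t =>
    show polyOp (if i = f t then d t else 0) (v (Sum.inr t)) = 0
    by_cases h : i = f t
    · rw [if_pos h]
      exact hall t
    · rw [if_neg h]
      exact polyOp_zero_poly _

end SmithApply

section MainAux

variable {n m q : ℕ} (E A : Matrix (Fin n) (Fin n) ℂ) (B : Matrix (Fin n) (Fin m) ℂ)
  (C : Matrix (Fin q) (Fin n) ℂ) (D : Matrix (Fin q) (Fin m) ℂ)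
  (k r : ℕ) (U U' : Matrix (Fin n ⊕ Fin q) (Fin n ⊕ Fin q) ℂ[X])
  (V : Matrix (Fin k ⊕ Fin r) (Fin n ⊕ Fin m) ℂ[X])
  (V' : Matrix (Fin n ⊕ Fin m) (Fin k ⊕ Fin r) ℂ[X])
  (f : Fin r ↪ (Fin n ⊕ Fin q)) (d : Fin r → ℂ[X])

lemma constrained_row (hU'U : U' * U = 1) (hP : Rpoly E A B C D = U * smithD k r f d * V)
    (w : (Fin n ⊕ Fin m) → ℕ → ℂ) (hw : MApply (Rpoly E A B C D) w = 0) (t : Fin r) :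
    polyOp (d t) (MApply V w (Sum.inr t)) = 0 := by
  have h1 : U' * Rpoly E A B C D = smithD k r f d * V := by
    rw [hP, ← Matrix.mul_assoc, ← Matrix.mul_assoc, hU'U, Matrix.one_mul]
  have h2 : MApply (smithD k r f d) (MApply V w) = 0 := by
    rw [← MApply_mul, ← h1, MApply_mul, hw, MApply_zero]
  have h3 := congrFun h2 (f t)
  rw [MApply_smithD_row] at h3
  exact h3

lemma sub_isZeroDyn (x x' : ℕ → Fin n → ℂ) (u u' : ℕ → Fin m → ℂ)
    (h : IsZeroDyn E A B C D x u) (h' : IsZeroDyn E A B C D x' u') :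
    IsZeroDyn E A B C D (fun j => x j - x' j) (fun j => u j - u' j) := by
  intro j
  constructor
  · show E *ᵥ (x (j+1) - x' (j+1)) = A *ᵥ (x j - x' j) + B *ᵥ (u j - u' j)
    rw [Matrix.mulVec_sub, Matrix.mulVec_sub, Matrix.mulVec_sub, (h j).1, (h' j).1]
    abel
  · show C *ᵥ (x j - x' j) + D *ᵥ (u j - u' j) = 0
    rw [Matrix.mulVec_sub, Matrix.mulVec_sub]
    have h4 : (C *ᵥ x j - C *ᵥ x' j) + (D *ᵥ u j - D *ᵥ u' j)
        = (C *ᵥ x j + D *ᵥ u j) - (C *ᵥ x' j + D *ᵥ u' j) := by abel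
    rw [h4, (h j).2, (h' j).2, sub_zero]

lemma claimB (hU'U : U' * U = 1) (hP : Rpoly E A B C D = U * smithD k r f d * V)
    (hd : ∀ t, d t ≠ 0) (x : ℕ → Fin n → ℂ) (u : ℕ → Fin m → ℂ)
    (hzd : IsZeroDyn E A B C D x u) (h0 : E *ᵥ x 0 = 0) (t : Fin r) :
    MApply V (wSeq x u) (Sum.inr t) = 0 := by
  set K := matDeg V + (d t).natDegree + 1 with hK
  have hzdD := delay_isZeroDyn E A B C D K x u hzd h0
  have hwD : MApply (Rpoly E A B C D) (delaySeq K (wSeq x u)) = 0 := by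
    rw [← wSeq_delay]
    exact (isZeroDyn_iff E A B C D _ _).mp hzdD
  have hcon := constrained_row E A B C D k r U U' V f d hU'U hP _ hwD t
  have hinit : ∀ j < (d t).natDegree, MApply V (delaySeq K (wSeq x u)) (Sum.inr t) j = 0 :=
    fun j hj => MApply_delay_early V _ K _ j (by omega)
  have hzero := polyOp_zero_of_initial (d t) (hd t) _ (fun j => congrFun hcon j) hinit
  funext j
  show MApply V (wSeq x u) (Sum.inr t) j = 0
  rw [← MApply_delay V (wSeq x u) K (Sum.inr t) j]
  exact hzero (K + j)


lemma dir_backward (hU'U : U' * U = 1) (hVV' : V * V' = 1) (hV'V : V' * V = 1)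
    (hd : ∀ t, d t ≠ 0) (hP : Rpoly E A B C D = U * smithD k r f d * V)
    (hstab : ∀ (t : Fin r) (lam : ℂ), 1 ≤ ‖lam‖ → Polynomial.eval lam (d t) ≠ 0)
    (x0 : Fin n → ℂ) (x : ℕ → Fin n → ℂ) (u : ℕ → Fin m → ℂ)
    (hzd : IsZeroDyn E A B C D x u) (hx0 : E *ᵥ x 0 = E *ᵥ x0) :
    ∃ x' u', IsZeroDyn E A B C D x' u' ∧ E *ᵥ x' 0 = E *ᵥ x0 ∧
      Tendsto x' atTop (nhds 0) ∧ Tendsto u' atTop (nhds 0) := by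
  classical
  set w := wSeq x u with hw
  have hbw : MApply (Rpoly E A B C D) w = 0 := (isZeroDyn_iff E A B C D x u).mp hzd
  set v := MApply V w with hv
  have hvt : ∀ t, polyOp (d t) (v (Sum.inr t)) = 0 :=
    fun t => constrained_row E A B C D k r U U' V f d hU'U hP w hbw t
  set K := matDeg V' with hKdef
  set vt : (Fin k ⊕ Fin r) → ℕ → ℂ := fun s => Sum.elim
    (fun a => fun j => if j ≤ K then v (Sum.inl a) j else 0)
    (fun t => v (Sum.inr t)) s with hvtdef
  set w' := MApply V' vt with hw'
  have hws : wSeq (fun j i => w' (Sum.inl i) j) (fun j i => w' (Sum.inr i) j) = w' := by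
    funext s j
    cases s <;> rfl
  have hvt' : ∀ t, polyOp (d t) (vt (Sum.inr t)) = 0 := fun t => hvt t
  refine ⟨fun j i => w' (Sum.inl i) j, fun j i => w' (Sum.inr i) j, ?_, ?_, ?_, ?_⟩
  · refine (isZeroDyn_iff E A B C D _ _).mpr ?_
    rw [hws]
    have hRV' : Rpoly E A B C D * V' = U * smithD k r f d := by
      rw [hP, Matrix.mul_assoc, hVV', Matrix.mul_one]
    have h2 : MApply (Rpoly E A B C D) w' = MApply (U * smithD k r f d) vt := by
      rw [hw', ← MApply_mul, hRV']
    rw [h2, MApply_mul, MApply_smithD_zero k r f d vt hvt', MApply_zero]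
  · have hagree0 : ∀ s, w' s 0 = w s 0 := by
      intro s
      have h1 : MApply V' vt s 0 = MApply V' v s 0 := by
        refine MApply_congr_window V' vt v 0 ?_ s
        intro s' tt htt
        cases s' with
        | inl a =>
          show (if tt ≤ K then v (Sum.inl a) tt else 0) = v (Sum.inl a) tt
          rw [if_pos (by omega)]
        | inr t => rfl
      have h2 : MApply V' v = w := by
        rw [hv, ← MApply_mul, hV'V, MApply_one]
      rw [hw', h1, h2]
    show E *ᵥ (fun i => w' (Sum.inl i) 0) = E *ᵥ x0
    have h4 : (fun i => w' (Sum.inl i) 0) = x 0 := by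
      funext i
      rw [hagree0 (Sum.inl i)]
      rfl
    rw [h4, hx0]
  · have hvtd : ∀ s, Tendsto (vt s) atTop (nhds 0) := by
      intro s
      cases s with
      | inl a =>
        refine Filter.Tendsto.congr' ?_ (tendsto_const_nhds (x := (0 : ℂ)))
        refine Filter.eventually_atTop.mpr ⟨K + 1, fun j hj => ?_⟩
        show (0 : ℂ) = if j ≤ K then v (Sum.inl a) j else 0
        rw [if_neg (by omega)]
      | inr t =>
        refine tendsto_zero_of_polyOp (d t) (hd t) ?_ _ (hvt t)
        intro μ hμ
        by_contra hge
        exact hstab t μ (le_of_not_gt hge) hμ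
    refine tendsto_pi_nhds.mpr fun i => ?_
    simpa using MApply_tendsto V' vt hvtd (Sum.inl i)
  · have hvtd : ∀ s, Tendsto (vt s) atTop (nhds 0) := by
      intro s
      cases s with
      | inl a =>
        refine Filter.Tendsto.congr' ?_ (tendsto_const_nhds (x := (0 : ℂ)))
        refine Filter.eventually_atTop.mpr ⟨K + 1, fun j hj => ?_⟩
        show (0 : ℂ) = if j ≤ K then v (Sum.inl a) j else 0
        rw [if_neg (by omega)]
      | inr t =>
        refine tendsto_zero_of_polyOp (d t) (hd t) ?_ _ (hvt t)
        intro μ hμ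
        by_contra hge
        exact hstab t μ (le_of_not_gt hge) hμ
    refine tendsto_pi_nhds.mpr fun i => ?_
    simpa using MApply_tendsto V' vt hvtd (Sum.inr i)

lemma dir_forward (hU'U : U' * U = 1) (hVV' : V * V' = 1) (hV'V : V' * V = 1)
    (hd : ∀ t, d t ≠ 0) (hP : Rpoly E A B C D = U * smithD k r f d * V)
    (hlhs : ∀ x0 : Fin n → ℂ, (∃ x u, IsZeroDyn E A B C D x u ∧ E *ᵥ x 0 = E *ᵥ x0) →
        ∃ x u, IsZeroDyn E A B C D x u ∧ E *ᵥ x 0 = E *ᵥ x0 ∧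
          Tendsto x atTop (nhds 0) ∧ Tendsto u atTop (nhds 0))
    (t₀ : Fin r) (lam : ℂ) (hlam : 1 ≤ ‖lam‖) :
    Polynomial.eval lam (d t₀) ≠ 0 := by
  classical
  intro heval
  set c : (Fin k ⊕ Fin r) → ℂ := fun s => if s = Sum.inr t₀ then 1 else 0 with hc
  set g : (Fin k ⊕ Fin r) → ℕ → ℂ := fun s j => c s * lam ^ j with hg
  set w := MApply V' g with hwdef
  -- w is a behavior trajectory
  have hRV' : Rpoly E A B C D * V' = U * smithD k r f d := by
    rw [hP, Matrix.mul_assoc, hVV', Matrix.mul_one]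
  have hDc : ((smithD (α := Fin n ⊕ Fin q) k r f d).map (Polynomial.eval lam)) *ᵥ c = 0 := by
    funext i
    show ∑ s, ((smithD (α := Fin n ⊕ Fin q) k r f d).map (Polynomial.eval lam)) i s * c s = 0
    rw [Finset.sum_eq_single (Sum.inr t₀)]
    · have hc1 : c (Sum.inr t₀) = 1 := by simp [hc]
      rw [hc1, mul_one]
      show Polynomial.eval lam (if i = f t₀ then d t₀ else 0) = 0
      by_cases h : i = f t₀
      · rw [if_pos h, heval]
      · rw [if_neg h, Polynomial.eval_zero]
    · intro s _ hs
      have hc2 : c s = 0 := by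
        simp only [hc]
        rw [if_neg hs]
      rw [hc2, mul_zero]
    · intro h
      exact absurd (Finset.mem_univ _) h
  have hbw : MApply (Rpoly E A B C D) w = 0 := by
    have h1 : MApply (Rpoly E A B C D) w = MApply (U * smithD k r f d) g := by
      rw [hwdef, ← MApply_mul, hRV']
    rw [h1]
    have h2 : MApply (U * smithD k r f d) g
        = fun i j => (((U * smithD k r f d).map (Polynomial.eval lam)) *ᵥ c) i * lam ^ j :=
      MApply_geom _ lam c
    rw [h2]
    have h3 : ((U * smithD k r f d).map (Polynomial.eval lam)) *ᵥ c = 0 := by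
      have h5 : ((U * smithD k r f d).map ⇑(Polynomial.evalRingHom lam)) *ᵥ c = 0 := by
        rw [Matrix.map_mul, ← Matrix.mulVec_mulVec, Polynomial.coe_evalRingHom, hDc,
          Matrix.mulVec_zero]
      simpa [Polynomial.coe_evalRingHom] using h5
    rw [h3]
    funext i j
    show (0 : (Fin n ⊕ Fin q) → ℂ) i * lam ^ j = 0
    rw [Pi.zero_apply, zero_mul]
  set xh : ℕ → Fin n → ℂ := fun j i => w (Sum.inl i) j with hxh
  set uh : ℕ → Fin m → ℂ := fun j i => w (Sum.inr i) j with huh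
  have hwsh : wSeq xh uh = w := by
    funext s j
    cases s <;> rfl
  have hzdh : IsZeroDyn E A B C D xh uh := by
    refine (isZeroDyn_iff E A B C D _ _).mpr ?_
    rw [hwsh]
    exact hbw
  obtain ⟨x', u', hzd', hx0', hxt', hut'⟩ := hlhs (xh 0) ⟨xh, uh, hzdh, rfl⟩
  -- the difference trajectory
  have hzdd : IsZeroDyn E A B C D (fun j => x' j - xh j) (fun j => u' j - uh j) :=
    sub_isZeroDyn E A B C D x' xh u' uh hzd' hzdh
  have h0d : E *ᵥ (fun j => x' j - xh j) 0 = 0 := by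
    show E *ᵥ (x' 0 - xh 0) = 0
    rw [Matrix.mulVec_sub, hx0', sub_self]
  have hcb := claimB E A B C D k r U U' V f d hU'U hP hd _ _ hzdd h0d t₀
  -- rewrite the difference
  have hsub : wSeq (fun j => x' j - xh j) (fun j => u' j - uh j) = wSeq x' u' - w := by
    funext s j
    cases s with
    | inl i => show x' j i - xh j i = wSeq x' u' (Sum.inl i) j - w (Sum.inl i) j ; rfl
    | inr i => show u' j i - uh j i = wSeq x' u' (Sum.inr i) j - w (Sum.inr i) j ; rfl
  rw [hsub, MApply_sub] at hcb
  have hVw : MApply V w = g := by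
    rw [hwdef, ← MApply_mul, hVV', MApply_one]
  have hkey : MApply V (wSeq x' u') (Sum.inr t₀) = g (Sum.inr t₀) := by
    have h6 : MApply V (wSeq x' u') (Sum.inr t₀) - g (Sum.inr t₀) = 0 := by
      rw [← hVw]
      exact hcb
    exact sub_eq_zero.mp h6
  -- left side tends to zero
  have hdecay : ∀ s, Tendsto (wSeq x' u' s) atTop (nhds 0) := by
    intro s
    cases s with
    | inl i => exact tendsto_pi_nhds.mp hxt' i
    | inr i => exact tendsto_pi_nhds.mp hut' i
  have htend : Tendsto (g (Sum.inr t₀)) atTop (nhds 0) := by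
    rw [← hkey]
    exact MApply_tendsto V (wSeq x' u') hdecay (Sum.inr t₀)
  have hg1 : g (Sum.inr t₀) = fun j => lam ^ j := by
    funext j
    have hc1 : c (Sum.inr t₀) = 1 := by simp [hc]
    show c (Sum.inr t₀) * lam ^ j = lam ^ j
    rw [hc1, one_mul]
  rw [hg1] at htend
  have hnorm : Tendsto (fun j => ‖lam ^ j‖) atTop (nhds 0) := by
    simpa using htend.norm
  obtain ⟨j, hj⟩ := (hnorm.eventually_lt_const one_pos).exists
  have : (1 : ℝ) ≤ ‖lam ^ j‖ := by
    rw [norm_pow]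
    refine one_le_pow₀ ?_
    exact hlam
  linarith


end MainAux

end Stmt2Aux

section MapIdent

open Polynomial

lemma Rrat_eq {n m q : ℕ} (E A : Matrix (Fin n) (Fin n) ℂ) (B : Matrix (Fin n) (Fin m) ℂ)
    (C : Matrix (Fin q) (Fin n) ℂ) (D : Matrix (Fin q) (Fin m) ℂ) :
    Rrat E A B C D = (Stmt2Aux.Rpoly E A B C D).map ⇑(algebraMap ℂ[X] (RatFunc ℂ)) := by
  apply Matrix.ext
  intro i j
  cases i with
  | inl i =>
    cases j with
    | inl j =>
      show ((RatFunc.X : RatFunc ℂ) • mapRat E - mapRat A) i j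
          = algebraMap ℂ[X] (RatFunc ℂ) (((X : ℂ[X]) • E.map ⇑(Polynomial.C (R := ℂ))
            - A.map ⇑(Polynomial.C (R := ℂ))) i j)
      rw [Matrix.sub_apply, Matrix.smul_apply, Matrix.sub_apply, Matrix.smul_apply]
      rw [Matrix.map_apply, Matrix.map_apply]
      rw [map_sub, smul_eq_mul, smul_eq_mul, _root_.map_mul, RatFunc.algebraMap_X,
        RatFunc.algebraMap_C, RatFunc.algebraMap_C]
      show RatFunc.X * algebraMap ℂ (RatFunc ℂ) (E i j) - algebraMap ℂ (RatFunc ℂ) (A i j) = _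
      rw [RatFunc.algebraMap_eq_C]
    | inr j =>
      show -(algebraMap ℂ (RatFunc ℂ) (B i j))
          = algebraMap ℂ[X] (RatFunc ℂ) (-(Polynomial.C (B i j)))
      rw [map_neg, RatFunc.algebraMap_C, RatFunc.algebraMap_eq_C]
  | inr i =>
    cases j with
    | inl j =>
      show algebraMap ℂ (RatFunc ℂ) (C i j) = algebraMap ℂ[X] (RatFunc ℂ) (Polynomial.C (C i j))
      rw [RatFunc.algebraMap_C, RatFunc.algebraMap_eq_C]
    | inr j =>
      show algebraMap ℂ (RatFunc ℂ) (D i j) = algebraMap ℂ[X] (RatFunc ℂ) (Polynomial.C (D i j))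
      rw [RatFunc.algebraMap_C, RatFunc.algebraMap_eq_C]

lemma Reval_eq {n m q : ℕ} (E A : Matrix (Fin n) (Fin n) ℂ) (B : Matrix (Fin n) (Fin m) ℂ)
    (C : Matrix (Fin q) (Fin n) ℂ) (D : Matrix (Fin q) (Fin m) ℂ) (lam : ℂ) :
    fromBlocks (lam • E - A) (-B) C D
      = (Stmt2Aux.Rpoly E A B C D).map ⇑(Polynomial.evalRingHom lam) := by
  apply Matrix.ext
  intro i j
  cases i with
  | inl i =>
    cases j with
    | inl j =>
      show (lam • E - A) i j = Polynomial.evalRingHom lam (((X : ℂ[X]) • E.map ⇑(Polynomial.C (R := ℂ))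
            - A.map ⇑(Polynomial.C (R := ℂ))) i j)
      rw [Matrix.sub_apply, Matrix.smul_apply, Matrix.sub_apply, Matrix.smul_apply]
      rw [Matrix.map_apply, Matrix.map_apply]
      show lam • E i j - A i j = Polynomial.evalRingHom lam ((X : ℂ[X]) * Polynomial.C (E i j) - Polynomial.C (A i j))
      rw [map_sub, _root_.map_mul]
      simp [Polynomial.coe_evalRingHom]
    | inr j =>
      show (-B) i j = Polynomial.evalRingHom lam ((-(B.map ⇑(Polynomial.C (R := ℂ)))) i j)
      rw [Matrix.neg_apply, Matrix.neg_apply, Matrix.map_apply, map_neg]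
      simp [Polynomial.coe_evalRingHom]
  | inr i =>
    cases j with
    | inl j =>
      show C i j = Polynomial.evalRingHom lam ((C.map ⇑(Polynomial.C (R := ℂ))) i j)
      rw [Matrix.map_apply]
      simp [Polynomial.coe_evalRingHom]
    | inr j =>
      show D i j = Polynomial.evalRingHom lam ((D.map ⇑(Polynomial.C (R := ℂ))) i j)
      rw [Matrix.map_apply]
      simp [Polynomial.coe_evalRingHom]

end MapIdent



/-- the zero dynamics is stabilizable iff the rank of `R(z)` over `ℂ(z)`
equals the rank of `R(λ)` for every `λ` with `|λ| ≥ 1`. -/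
theorem stmt_2 {n m q : ℕ} (E A : Matrix (Fin n) (Fin n) ℂ) (B : Matrix (Fin n) (Fin m) ℂ)
    (C : Matrix (Fin q) (Fin n) ℂ) (D : Matrix (Fin q) (Fin m) ℂ)
    (hreg : RegularPencil E A) :
    ((∀ x0 : Fin n → ℂ, (∃ x u, IsZeroDyn E A B C D x u ∧ E *ᵥ x 0 = E *ᵥ x0) →
        ∃ x u, IsZeroDyn E A B C D x u ∧ E *ᵥ x 0 = E *ᵥ x0 ∧
          Tendsto x atTop (nhds 0) ∧ Tendsto u atTop (nhds 0)) ↔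
      ∀ lam : ℂ, 1 ≤ ‖lam‖ →
        (Rrat E A B C D).rank = (fromBlocks (lam • E - A) (-B) C D).rank) := by
  classical
  obtain ⟨k, r, U, U', V, V', f, d, hUU', hU'U, hVV', hV'V, hd, hP⟩ :=
    Stmt2Aux.smith_exists (Stmt2Aux.Rpoly E A B C D)
  have hrankRat : (Rrat E A B C D).rank = r := by
    rw [Rrat_eq, Stmt2Aux.rank_map_of_smith _ k r U U' V V' f d hU'U hVV' hP
      (algebraMap (Polynomial ℂ) (RatFunc ℂ))]
    have hall : ∀ t : Fin r, algebraMap (Polynomial ℂ) (RatFunc ℂ) (d t) ≠ 0 := by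
      intro t h
      exact hd t (IsFractionRing.injective (Polynomial ℂ) (RatFunc ℂ) (by rw [h, map_zero]))
    rw [Fintype.card_eq.mpr ⟨Equiv.subtypeUnivEquiv hall⟩, Fintype.card_fin]
  have hranklam : ∀ lam : ℂ, (fromBlocks (lam • E - A) (-B) C D).rank
      = Fintype.card {t : Fin r // Polynomial.eval lam (d t) ≠ 0} := by
    intro lam
    rw [Reval_eq E A B C D lam, Stmt2Aux.rank_map_of_smith _ k r U U' V V' f d hU'U hVV' hP
      (Polynomial.evalRingHom lam)]
    apply Fintype.card_congr
    apply Equiv.subtypeEquivRight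
    intro t
    rw [Polynomial.coe_evalRingHom]
  constructor
  · intro hlhs lam hlam
    have hstab : ∀ t : Fin r, Polynomial.eval lam (d t) ≠ 0 := fun t =>
      Stmt2Aux.dir_forward E A B C D k r U U' V V' f d hU'U hVV' hV'V hd hP hlhs t lam hlam
    rw [hrankRat, hranklam lam, Fintype.card_eq.mpr ⟨Equiv.subtypeUnivEquiv hstab⟩,
      Fintype.card_fin]
  · intro hrhs x0 hex
    obtain ⟨x, u, hzd, hx0⟩ := hex
    have hstab : ∀ (t : Fin r) (lam : ℂ), 1 ≤ ‖lam‖ → Polynomial.eval lam (d t) ≠ 0 := by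
      intro t lam hlam heval
      have h1 := hrhs lam hlam
      rw [hrankRat, hranklam lam] at h1
      have h2 : Fintype.card {t : Fin r // Polynomial.eval lam (d t) ≠ 0} < Fintype.card (Fin r) :=
        Fintype.card_subtype_lt (x := t) (by simp [heval])
      rw [Fintype.card_fin] at h2
      omega
    exact Stmt2Aux.dir_backward E A B C D k r U U' V V' f d hU'U hVV' hV'V hd hP hstab
      x0 x u hzd hx0
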